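/- Let ρ > 0 and 0 < t₁ ≤ t₂, let Q₁ : [t₂, ∞) → ℝ satisfy Q₁(t) ≤ (1 − ρ)·t₁^ρ·t^{−ρ} for all t ≥ t₂, and let Q₂ : [t₂, ∞) → ℝ be differentiable with Q₂'(t) ≤ −(ρ/t)·(Q₂(t) − Q₁(t)) for all t ≥ t₂ and Q₂(t₂) ≤ 1 − ρ²/2. Then Q₂(t) ≤ t^{−ρ}·(α₁·ln t + α₂) for every t ≥ t₂, where α₁ = ρ·(1 − ρ)·t₁^ρ and α₂ = (1 − ρ²/2)·t₂^ρ − α₁·ln t₂. -/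
import Mathlib


/-- Convergence-rate bound for the second milestone (Section 5.3 of the paper):
with `Q₁(t) ≤ (1 − ρ)·t₁^ρ·t^{−ρ}`, if `Q₂'(t) ≤ −(ρ/t)(Q₂(t) − Q₁(t))` for `t ≥ t₂`
and `Q₂(t₂) ≤ 1 − ρ²/2`, then `Q₂(t) ≤ t^{−ρ}(α₁ ln t + α₂)` with
`α₁ = ρ(1 − ρ)t₁^ρ` and `α₂ = (1 − ρ²/2)t₂^ρ − α₁ ln t₂`. -/
theorem stmt_11 (ρ t₁ t₂ : ℝ) (hρ : 0 < ρ) (ht₁ : 0 < t₁) (ht₁₂ : t₁ ≤ t₂)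
    (Q₁ Q₂ : ℝ → ℝ)
    (hQ₁ : ∀ t, t₂ ≤ t → Q₁ t ≤ (1 - ρ) * t₁ ^ ρ * t ^ (-ρ))
    (hdiff : ∀ t, t₂ ≤ t → DifferentiableAt ℝ Q₂ t)
    (hderiv : ∀ t, t₂ ≤ t → deriv Q₂ t ≤ -(ρ / t) * (Q₂ t - Q₁ t))
    (hinit : Q₂ t₂ ≤ 1 - ρ ^ 2 / 2) :
    ∀ t, t₂ ≤ t →
      Q₂ t ≤ t ^ (-ρ) *
        ((ρ * (1 - ρ) * t₁ ^ ρ) * Real.log t +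
          ((1 - ρ ^ 2 / 2) * t₂ ^ ρ - (ρ * (1 - ρ) * t₁ ^ ρ) * Real.log t₂)) := by
  intro t ht
  have ht₂pos : 0 < t₂ := lt_of_lt_of_le ht₁ ht₁₂
  have htpos : 0 < t := lt_of_lt_of_le ht₂pos ht
  set α₁ : ℝ := ρ * (1 - ρ) * t₁ ^ ρ with hα₁
  set g : ℝ → ℝ := fun s => s ^ ρ * Q₂ s - α₁ * Real.log s with hg
  have hgdiff : ∀ s, t₂ ≤ s →
      HasDerivAt g (ρ * s ^ (ρ - 1) * Q₂ s + s ^ ρ * deriv Q₂ s - α₁ * s⁻¹) s := by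
    intro s hs
    have hspos : 0 < s := lt_of_lt_of_le ht₂pos hs
    have h1 : HasDerivAt (fun x : ℝ => x ^ ρ) (ρ * s ^ (ρ - 1)) s :=
      Real.hasDerivAt_rpow_const (Or.inl hspos.ne')
    have h2 : HasDerivAt Q₂ (deriv Q₂ s) s := (hdiff s hs).hasDerivAt
    have h3 : HasDerivAt (fun x : ℝ => α₁ * Real.log x) (α₁ * s⁻¹) s :=
      (Real.hasDerivAt_log hspos.ne').const_mul α₁
    exact (h1.mul h2).sub h3
  have hanti : AntitoneOn g (Set.Ici t₂) := by
    apply antitoneOn_of_deriv_nonpos (convex_Ici t₂)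
    · intro s hs
      exact ((hgdiff s hs).differentiableAt.continuousAt).continuousWithinAt
    · intro s hs
      rw [interior_Ici] at hs
      exact (hgdiff s (le_of_lt hs)).differentiableAt.differentiableWithinAt
    · intro s hs
      rw [interior_Ici] at hs
      have hs' : t₂ ≤ s := le_of_lt hs
      have hspos : 0 < s := lt_of_lt_of_le ht₂pos hs'
      rw [(hgdiff s hs').deriv]
      set A : ℝ := s ^ (ρ - 1) with hA
      have hA0 : 0 ≤ A := Real.rpow_nonneg hspos.le _
      have hAs : s ^ ρ = A * s := by
        rw [hA, ← Real.rpow_add_one hspos.ne']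
        norm_num
      have hAneg : A * s ^ (-ρ) = s⁻¹ := by
        rw [hA, ← Real.rpow_add hspos]
        have hexp : ρ - 1 + -ρ = -1 := by ring
        rw [hexp, Real.rpow_neg_one]
      have hd' : s ^ ρ * deriv Q₂ s ≤ ρ * A * Q₁ s - ρ * A * Q₂ s := by
        calc s ^ ρ * deriv Q₂ s
            ≤ s ^ ρ * (-(ρ / s) * (Q₂ s - Q₁ s)) :=
              mul_le_mul_of_nonneg_left (hderiv s hs') (Real.rpow_nonneg hspos.le ρ)
          _ = ρ * A * Q₁ s - ρ * A * Q₂ s := by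
              rw [hAs]; field_simp; ring
      have hmul : ρ * A * Q₁ s ≤ α₁ * s⁻¹ := by
        have h := mul_le_mul_of_nonneg_left (hQ₁ s hs')
          (by positivity : (0:ℝ) ≤ ρ * A)
        calc ρ * A * Q₁ s ≤ ρ * A * ((1 - ρ) * t₁ ^ ρ * s ^ (-ρ)) := h
          _ = α₁ * (A * s ^ (-ρ)) := by rw [hα₁]; ring
          _ = α₁ * s⁻¹ := by rw [hAneg]
      linarith
  have hgt : g t ≤ g t₂ := hanti (Set.self_mem_Ici) ht ht
  have hinit' : t₂ ^ ρ * Q₂ t₂ ≤ t₂ ^ ρ * (1 - ρ ^ 2 / 2) :=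
    mul_le_mul_of_nonneg_left hinit (Real.rpow_nonneg ht₂pos.le ρ)
  have h1 : t ^ ρ * Q₂ t ≤ α₁ * Real.log t +
      ((1 - ρ ^ 2 / 2) * t₂ ^ ρ - α₁ * Real.log t₂) := by
    have : g t = t ^ ρ * Q₂ t - α₁ * Real.log t := rfl
    have : g t₂ = t₂ ^ ρ * Q₂ t₂ - α₁ * Real.log t₂ := rfl
    simp only [hg] at hgt
    nlinarith [hgt, hinit']
  have hkey : t ^ (-ρ) * t ^ ρ = 1 := by
    rw [← Real.rpow_add htpos]
    norm_num
  have h2 := mul_le_mul_of_nonneg_left h1 (Real.rpow_nonneg htpos.le (-ρ))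
  calc Q₂ t = (t ^ (-ρ) * t ^ ρ) * Q₂ t := by rw [hkey]; ring
    _ = t ^ (-ρ) * (t ^ ρ * Q₂ t) := by ring
    _ ≤ _ := by exact h2
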